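/- If X is a reflexive Banach space and Y is a proper closed linear subspace of X, then there exists x in the unit sphere of X with dist(x, Y) = 1. -/

import Mathlib

open NormedSpace

/-- In a reflexive space, every continuous linear functional attains its norm on the
closed unit ball. -/
lemma attains_norm_of_reflexive {X : Type*} [NormedAddCommGroup X] [NormedSpace ℝ X]
    (hrefl : Function.Surjective (inclusionInDoubleDual ℝ X)) (f : StrongDual ℝ X) :
    ∃ x : X, ‖x‖ ≤ 1 ∧ f x = ‖f‖ := by
  set B : Set (WeakDual ℝ (StrongDual ℝ X)) :=
    WeakDual.toStrongDual ⁻¹' Metric.closedBall 0 1 with hB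
  have hBc : IsCompact B := WeakDual.isCompact_closedBall (𝕜 := ℝ) (E := StrongDual ℝ X) 0 1
  have hBne : B.Nonempty := ⟨0, by simp [hB]⟩
  obtain ⟨Φ, hΦB, hmax⟩ :=
    hBc.exists_isMaxOn hBne ((WeakDual.eval_continuous f).continuousOn)
  -- every `J z` with `‖z‖ ≤ 1` lies in `B`
  have hmem : ∀ z : X, ‖z‖ ≤ 1 →
      (StrongDual.toWeakDual (inclusionInDoubleDual ℝ X z)) ∈ B := by
    intro z hz
    simp only [hB, Set.mem_preimage, Metric.mem_closedBall, dist_zero_right]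
    calc dist (WeakDual.toStrongDual (StrongDual.toWeakDual (inclusionInDoubleDual ℝ X z))) 0
        = ‖inclusionInDoubleDual ℝ X z‖ := by exact dist_zero_right (inclusionInDoubleDual ℝ X z)
      _ ≤ ‖z‖ := double_dual_bound ℝ X z
      _ ≤ 1 := hz
  -- `Φ f ≥ ‖f‖`
  have hge : ‖f‖ ≤ Φ f := by
    refine le_of_forall_lt fun c hc => ?_
    obtain ⟨z, hz1, hz2⟩ := f.exists_lt_apply_of_lt_opNorm hc
    rcases abs_cases (f z) with ⟨he, _⟩ | ⟨he, _⟩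
    · have := hmax (hmem z hz1.le)
      calc c < ‖f z‖ := hz2
        _ = f z := by rw [Real.norm_eq_abs, he]
        _ ≤ Φ f := this
    · have hz1' : ‖(-z : X)‖ ≤ 1 := by simpa using hz1.le
      have := hmax (hmem (-z) hz1')
      have happ : (StrongDual.toWeakDual (inclusionInDoubleDual ℝ X (-z))) f = f (-z) := rfl
      calc c < ‖f z‖ := hz2
        _ = f (-z) := by rw [Real.norm_eq_abs, he, map_neg]
        _ ≤ Φ f := by rw [← happ]; exact this
  obtain ⟨x, hx⟩ := hrefl (WeakDual.toStrongDual Φ)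
  have hxn : ‖x‖ ≤ 1 := by
    have : ‖inclusionInDoubleDual ℝ X x‖ = ‖x‖ :=
      (inclusionInDoubleDualLi ℝ (E := X)).norm_map x
    rw [← this, hx]
    exact (show ‖WeakDual.toStrongDual Φ‖ = dist (WeakDual.toStrongDual Φ) 0 by exact (dist_zero_right (WeakDual.toStrongDual Φ)).symm).trans_le hΦB
  have hfx : f x = Φ f := by
    have : inclusionInDoubleDual ℝ X x f = f x := rfl
    rw [← this, hx]; rfl
  have hle : f x ≤ ‖f‖ := by
    calc f x ≤ ‖f x‖ := Real.le_norm_self _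
      _ ≤ ‖f‖ * ‖x‖ := f.le_opNorm x
      _ ≤ ‖f‖ * 1 := by
          exact mul_le_mul_of_nonneg_left hxn (norm_nonneg f)
      _ = ‖f‖ := mul_one _
  exact ⟨x, hxn, le_antisymm hle (hge.trans_eq hfx.symm)⟩

/-- If `X` is a reflexive Banach space and `Y` is a proper closed linear subspace of `X`,
then there exists `x` in the unit sphere of `X` with `dist (x, Y) = 1`. -/
theorem riesz_lemma_reflexive {X : Type*} [NormedAddCommGroup X] [NormedSpace ℝ X]
    [CompleteSpace X]
    (hrefl : Function.Surjective (inclusionInDoubleDual ℝ X))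
    (Y : Subspace ℝ X) (hYc : IsClosed (Y : Set X)) (hY : ∃ x : X, x ∉ Y) :
    ∃ x : X, ‖x‖ = 1 ∧ Metric.infDist x (Y : Set X) = 1 := by
  obtain ⟨x₀, hx₀⟩ := hY
  -- separate `x₀` from `Y` by a functional
  obtain ⟨f, u, hfu, hub⟩ :=
    geometric_hahn_banach_point_closed (Y.convex) hYc hx₀
  -- `f` vanishes on `Y`
  have hfY : ∀ y ∈ Y, f y = 0 := by
    intro y hy
    by_contra h
    -- scale `y` to make `f` arbitrarily negative on `Y`
    have : ∀ t : ℝ, u < t * f y := by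
      intro t
      have := hub (t • y) (Y.smul_mem t hy)
      simpa using this
    rcases lt_trichotomy (f y) 0 with hneg | hzero | hpos
    · have h1 := this ((u - 1) / f y)
      rw [div_mul_cancel₀ _ hneg.ne] at h1
      linarith
    · exact h hzero
    · have h1 := this ((u - 1) / f y)
      rw [div_mul_cancel₀ _ hpos.ne'] at h1
      linarith
  -- `f ≠ 0`
  have hu0 : u < 0 := by simpa using hub 0 Y.zero_mem
  have hf0 : f ≠ 0 := by
    intro h
    rw [h] at hfu
    simp only [ContinuousLinearMap.zero_apply] at hfu
    linarith
  have hfpos : 0 < ‖f‖ := norm_pos_iff.mpr hf0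
  obtain ⟨x, hx1, hx2⟩ := attains_norm_of_reflexive hrefl f
  have hYne : (Y : Set X).Nonempty := ⟨0, Y.zero_mem⟩
  -- lower bound on distances
  have hdist : ∀ y ∈ (Y : Set X), 1 ≤ dist x y := by
    intro y hy
    have : ‖f‖ = f (x - y) := by
      rw [map_sub, hfY y hy, sub_zero, hx2]
    have h2 : ‖f‖ ≤ ‖f‖ * ‖x - y‖ := by
      calc ‖f‖ = f (x - y) := this
        _ ≤ ‖f (x - y)‖ := Real.le_norm_self _
        _ ≤ ‖f‖ * ‖x - y‖ := f.le_opNorm _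
    rw [dist_eq_norm]
    have h3 : ‖f‖ * 1 ≤ ‖f‖ * ‖x - y‖ := by linarith
    exact le_of_mul_le_mul_left h3 hfpos
  have hge : 1 ≤ Metric.infDist x (Y : Set X) := by
    by_contra h
    obtain ⟨y, hy, hlt⟩ := (Metric.infDist_lt_iff hYne).1 (not_le.1 h)
    exact absurd (hdist y hy) (not_le.2 hlt)
  have hxnorm : ‖x‖ = 1 := by
    have h1 : 1 ≤ ‖x‖ := by
      have := hdist 0 Y.zero_mem
      simpa [dist_eq_norm] using this
    linarith
  have hle : Metric.infDist x (Y : Set X) ≤ 1 := by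
    have := Metric.infDist_le_dist_of_mem (x := x) (Y.zero_mem (R := ℝ))
    simpa [dist_eq_norm, hxnorm] using this
  exact ⟨x, hxnorm, le_antisymm hle hge⟩
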